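/- Let φ be infinitely differentiable with φ'(z) ≥ ρ1 and φ'''(z) ≥ ρ2 for all z ∈ ℝ, where ρ1, ρ2 > 0, satisfying β-normality with constant β > 0, and assume the coherence assumption with constant μ > 0. Let θ : [0, ∞) → ℝ^{md} be a Riemannian gradient-flow trajectory of G on the zero-loss set, and for each i let ν_i be the unique real number with φ(ν_i) = y_i / m. Then for every ε > 0 and every time t ≥ G(θ(0)) / (μ β²) + log(max(β² / (ρ1² ρ2² ε²), 1)) / (ρ1 ρ2 μ), one has |θ_j(t) · x_i − ν_i| ≤ ε for all i ∈ {1,…,n} and j ∈ {1,…,m}; i.e., every neuron's inner product with every data point is ε-close to that of the global optimum. -/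

import Mathlib

open scoped RealInnerProductSpace
open Real Filter

noncomputable section

/-- The parameter space ℝ^{md}: m blocks θ_j ∈ ℝ^d, with the Euclidean norm. -/
abbrev Param (m d : ℕ) : Type := PiLp 2 (fun _ : Fin m => EuclideanSpace ℝ (Fin d))

instance paramCSMul (m d : ℕ) : ContinuousSMul ℝ (Param m d) := inferInstance

/-- Network output f_i(θ) = Σ_j φ(θ_j · x_i). -/
def netF {n m d : ℕ} (φ : ℝ → ℝ) (x : Fin n → EuclideanSpace ℝ (Fin d)) (i : Fin n)
    (θ : Param m d) : ℝ := ∑ j, φ ⟪θ j, x i⟫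

/-- Euclidean gradient Df_i(θ), with j-th block φ'(θ_j · x_i) x_i. -/
def gradF {n m d : ℕ} (φ : ℝ → ℝ) (x : Fin n → EuclideanSpace ℝ (Fin d)) (i : Fin n)
    (θ : Param m d) : Param m d := WithLp.toLp 2 (fun j => (deriv φ ⟪θ j, x i⟫) • x i)

/-- Implicit regularizer G(θ) = Σ_i Σ_j φ'(θ_j · x_i)². -/
def regG {n m d : ℕ} (φ : ℝ → ℝ) (x : Fin n → EuclideanSpace ℝ (Fin d))
    (θ : Param m d) : ℝ := ∑ i, ∑ j, (deriv φ ⟪θ j, x i⟫) ^ 2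

/-- Euclidean gradient DG(θ), with j-th block Σ_i 2 φ'(θ_j·x_i) φ''(θ_j·x_i) x_i. -/
def gradRegG {n m d : ℕ} (φ : ℝ → ℝ) (x : Fin n → EuclideanSpace ℝ (Fin d))
    (θ : Param m d) : Param m d :=
  WithLp.toLp 2 (fun j => ∑ i, (2 * deriv φ ⟪θ j, x i⟫ * deriv (deriv φ) ⟪θ j, x i⟫) • x i)

/-- Squared loss L(θ) = Σ_i (f_i(θ) − y_i)². -/
def lossL {n m d : ℕ} (φ : ℝ → ℝ) (x : Fin n → EuclideanSpace ℝ (Fin d)) (y : Fin n → ℝ)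
    (θ : Param m d) : ℝ := ∑ i, (netF φ x i θ - y i) ^ 2

/-- Jacobian Df(θ) : ℝ^{md} → ℝ^n, whose i-th row is Df_i(θ). -/
def jacobian {n m d : ℕ} (φ : ℝ → ℝ) (x : Fin n → EuclideanSpace ℝ (Fin d))
    (θ : Param m d) : Param m d →ₗ[ℝ] (Fin n → ℝ) :=
  LinearMap.pi fun i => (innerSL ℝ (gradF φ x i θ)).toLinearMap

/-- Riemannian gradient ∇G(θ): orthogonal projection of DG(θ) onto ker Df(θ). -/
def rgradG {n m d : ℕ} (φ : ℝ → ℝ) (x : Fin n → EuclideanSpace ℝ (Fin d))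
    (θ : Param m d) : Param m d :=
  ((LinearMap.ker (jacobian φ x θ)).orthogonalProjectionOnto (gradRegG φ x θ) : Param m d)

section OneD

variable {φ : ℝ → ℝ} {ρ1 ρ2 β : ℝ}

private lemma diff1 (hφ : ContDiff ℝ (⊤ : ℕ∞) φ) : Differentiable ℝ φ :=
  hφ.differentiable (by simp)

private lemma cdD (hφ : ContDiff ℝ (⊤ : ℕ∞) φ) : ContDiff ℝ (⊤ : ℕ∞) (deriv φ) :=
  (contDiff_infty_iff_deriv.mp hφ).2

private lemma diff2 (hφ : ContDiff ℝ (⊤ : ℕ∞) φ) : Differentiable ℝ (deriv φ) :=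
  diff1 (cdD hφ)

private lemma diff3 (hφ : ContDiff ℝ (⊤ : ℕ∞) φ) : Differentiable ℝ (deriv (deriv φ)) :=
  diff1 (cdD (cdD hφ))

private lemma hd_linear (c : ℝ) (z : ℝ) : HasDerivAt (fun y : ℝ => c * y) c z := by
  simpa using (hasDerivAt_id z).const_mul c

/-- growth of φ'' -/
private lemma phi2_lb (hφ : ContDiff ℝ (⊤ : ℕ∞) φ)
    (hφ''' : ∀ z, ρ2 ≤ deriv (deriv (deriv φ)) z) {u v : ℝ} (huv : u ≤ v) :
    ρ2 * (v - u) ≤ deriv (deriv φ) v - deriv (deriv φ) u := by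
  have hmono : Monotone (fun z => deriv (deriv φ) z - ρ2 * z) := by
    apply monotone_of_deriv_nonneg
    · exact (diff3 hφ).sub (differentiable_id.const_mul ρ2)
    · intro z
      have h1 : HasDerivAt (fun z => deriv (deriv φ) z - ρ2 * z)
          (deriv (deriv (deriv φ)) z - ρ2) z :=
        ((diff3 hφ z).hasDerivAt).sub (hd_linear ρ2 z)
      rw [h1.deriv]
      linarith [hφ''' z]
  have := hmono huv
  simp only at this
  linarith

/-- growth of φ -/
private lemma phi0_lb (hφ : ContDiff ℝ (⊤ : ℕ∞) φ)
    (hφ' : ∀ z, ρ1 ≤ deriv φ z) {u v : ℝ} (huv : u ≤ v) :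
    ρ1 * (v - u) ≤ φ v - φ u := by
  have hmono : Monotone (fun z => φ z - ρ1 * z) := by
    apply monotone_of_deriv_nonneg
    · exact (diff1 hφ).sub (differentiable_id.const_mul ρ1)
    · intro z
      have h1 : HasDerivAt (fun z => φ z - ρ1 * z) (deriv φ z - ρ1) z :=
        ((diff1 hφ z).hasDerivAt).sub (hd_linear ρ1 z)
      rw [h1.deriv]
      linarith [hφ' z]
  have := hmono huv
  simp only at this
  linarith

end OneD

section OneD2

variable {φ : ℝ → ℝ} {ρ1 ρ2 β : ℝ}

/-- monotone combination W = φ''/β - 1/φ' -/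
private lemma Wmono (hφ : ContDiff ℝ (⊤ : ℕ∞) φ) (hρ1 : 0 < ρ1)
    (hφ' : ∀ z, ρ1 ≤ deriv φ z) (hβ : 0 < β)
    (hnormal : ∀ z, β * |deriv (deriv φ) z| ≤ (deriv φ z) ^ 2 * deriv (deriv (deriv φ)) z) :
    Monotone (fun z => deriv (deriv φ) z / β - (deriv φ z)⁻¹) := by
  apply monotone_of_deriv_nonneg
  · refine ((diff3 hφ).div_const β).sub ?_
    exact (diff2 hφ).inv (fun z => (lt_of_lt_of_le hρ1 (hφ' z)).ne')
  · intro z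
    have hψ : 0 < deriv φ z := lt_of_lt_of_le hρ1 (hφ' z)
    have h1 : HasDerivAt (fun z => deriv (deriv φ) z / β - (deriv φ z)⁻¹)
        (deriv (deriv (deriv φ)) z / β -
          (-(deriv (deriv φ) z) / (deriv φ z) ^ 2)) z :=
      (((diff3 hφ z).hasDerivAt).div_const β).sub
        (((diff2 hφ z).hasDerivAt).inv hψ.ne')
    rw [h1.deriv]
    have hn := hnormal z
    have habs : -|deriv (deriv φ) z| ≤ deriv (deriv φ) z := neg_abs_le _
    have h2 : 0 ≤ (deriv (deriv (deriv φ)) z * (deriv φ z)^2 + β * deriv (deriv φ) z) := by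
      nlinarith
    have heq : deriv (deriv (deriv φ)) z / β - -(deriv (deriv φ) z) / (deriv φ z) ^ 2
        = (deriv (deriv (deriv φ)) z * (deriv φ z)^2 + β * deriv (deriv φ) z) / (β * (deriv φ z)^2) := by
      field_simp
      try ring
    rw [heq]
    positivity

/-- monotone combination V = φ''/β + 1/φ' -/
private lemma Vmono (hφ : ContDiff ℝ (⊤ : ℕ∞) φ) (hρ1 : 0 < ρ1)
    (hφ' : ∀ z, ρ1 ≤ deriv φ z) (hβ : 0 < β)
    (hnormal : ∀ z, β * |deriv (deriv φ) z| ≤ (deriv φ z) ^ 2 * deriv (deriv (deriv φ)) z) :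
    Monotone (fun z => deriv (deriv φ) z / β + (deriv φ z)⁻¹) := by
  apply monotone_of_deriv_nonneg
  · refine ((diff3 hφ).div_const β).add ?_
    exact (diff2 hφ).inv (fun z => (lt_of_lt_of_le hρ1 (hφ' z)).ne')
  · intro z
    have hψ : 0 < deriv φ z := lt_of_lt_of_le hρ1 (hφ' z)
    have h1 : HasDerivAt (fun z => deriv (deriv φ) z / β + (deriv φ z)⁻¹)
        (deriv (deriv (deriv φ)) z / β +
          (-(deriv (deriv φ) z) / (deriv φ z) ^ 2)) z :=
      (((diff3 hφ z).hasDerivAt).div_const β).add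
        (((diff2 hφ z).hasDerivAt).inv hψ.ne')
    rw [h1.deriv]
    have hn := hnormal z
    have habs : deriv (deriv φ) z ≤ |deriv (deriv φ) z| := le_abs_self _
    have h2 : 0 ≤ (deriv (deriv (deriv φ)) z * (deriv φ z)^2 - β * deriv (deriv φ) z) := by
      nlinarith
    have heq : deriv (deriv (deriv φ)) z / β + -(deriv (deriv φ) z) / (deriv φ z) ^ 2
        = (deriv (deriv (deriv φ)) z * (deriv φ z)^2 - β * deriv (deriv φ) z) / (β * (deriv φ z)^2) := by
      field_simp
      try ring
    rw [heq]
    positivity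

/-- key segment bound: if |φ''(s)-φ''(a)| ≤ δ and 2 φ'(a) δ < β then φ'(s) ≤ 2 φ'(a). -/
private lemma seg_bound (hφ : ContDiff ℝ (⊤ : ℕ∞) φ) (hρ1 : 0 < ρ1)
    (hφ' : ∀ z, ρ1 ≤ deriv φ z) (hβ : 0 < β)
    (hnormal : ∀ z, β * |deriv (deriv φ) z| ≤ (deriv φ z) ^ 2 * deriv (deriv (deriv φ)) z)
    {s a δ : ℝ} (hκ : |deriv (deriv φ) s - deriv (deriv φ) a| ≤ δ)
    (hsmall : 2 * deriv φ a * δ < β) :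
    deriv φ s ≤ 2 * deriv φ a := by
  have hψa : 0 < deriv φ a := lt_of_lt_of_le hρ1 (hφ' a)
  have hψs : 0 < deriv φ s := lt_of_lt_of_le hρ1 (hφ' s)
  have hδ : 0 ≤ δ := le_trans (abs_nonneg _) hκ
  -- lower bound on (φ' s)⁻¹
  have hinv : (deriv φ a)⁻¹ - δ / β ≤ (deriv φ s)⁻¹ := by
    rcases le_total s a with hsa | has
    · have hW := Wmono hφ hρ1 hφ' hβ hnormal hsa
      simp only at hW
      have habs : deriv (deriv φ) a - deriv (deriv φ) s ≤ δ := by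
        have h := abs_le.mp hκ; linarith [h.1]
      have h3 : deriv (deriv φ) a / β - deriv (deriv φ) s / β ≤ δ / β := by
        rw [← sub_div]; gcongr
      linarith
    · have hV := Vmono hφ hρ1 hφ' hβ hnormal has
      simp only at hV
      have habs : deriv (deriv φ) s - deriv (deriv φ) a ≤ δ := by
        have h := abs_le.mp hκ; linarith [h.2]
      have h3 : deriv (deriv φ) s / β - deriv (deriv φ) a / β ≤ δ / β := by
        rw [← sub_div]; gcongr
      linarith
  have hhalf : δ / β < (2 * deriv φ a)⁻¹ := by
    rw [div_lt_iff₀ hβ, inv_mul_eq_div, lt_div_iff₀ (by positivity)]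
    nlinarith
  have h5 : (2 * deriv φ a)⁻¹ ≤ (deriv φ s)⁻¹ := by
    have heq : (deriv φ a)⁻¹ - (2 * deriv φ a)⁻¹ = (2 * deriv φ a)⁻¹ := by
      field_simp; ring
    linarith
  exact (inv_le_inv₀ (by positivity) (by positivity)).mp h5

end OneD2

section OneD3

variable {φ : ℝ → ℝ} {ρ1 ρ2 β : ℝ}

/-- auxiliary function F_c(a) = φ'(a)² - 2c φ(a) -/
private def Ffun (φ : ℝ → ℝ) (c a : ℝ) : ℝ := (deriv φ a)^2 - 2*c*(φ a)

private lemma hasDerivF (hφ : ContDiff ℝ (⊤ : ℕ∞) φ) (c a : ℝ) :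
    HasDerivAt (Ffun φ c) (2 * deriv φ a * (deriv (deriv φ) a - c)) a := by
  have h1 : HasDerivAt (fun a => (deriv φ a)^2)
      ((2:ℕ) * (deriv φ a)^1 * deriv (deriv φ) a) a := ((diff2 hφ a).hasDerivAt).fun_pow 2
  have h2 : HasDerivAt (fun a => 2*c*(φ a)) (2*c*(deriv φ a)) a := by
    simpa using ((diff1 hφ a).hasDerivAt).const_mul (2*c)
  have := h1.sub h2
  refine this.congr_deriv ?_
  push_cast
  ring

private lemma diffF (hφ : ContDiff ℝ (⊤ : ℕ∞) φ) (c : ℝ) : Differentiable ℝ (Ffun φ c) :=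
  fun a => (hasDerivF hφ c a).differentiableAt

/-- F_c is minimized at any point where φ'' = c -/
private lemma Fmin (hφ : ContDiff ℝ (⊤ : ℕ∞) φ) (hρ1 : 0 < ρ1) (hρ2 : 0 < ρ2)
    (hφ' : ∀ z, ρ1 ≤ deriv φ z) (hφ''' : ∀ z, ρ2 ≤ deriv (deriv (deriv φ)) z)
    {c ac : ℝ} (hac : deriv (deriv φ) ac = c) (ν : ℝ) :
    Ffun φ c ac ≤ Ffun φ c ν := by
  rcases le_total ac ν with h | h
  · have hmono : MonotoneOn (Ffun φ c) (Set.Ici ac) := by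
      apply monotoneOn_of_deriv_nonneg (convex_Ici ac)
        ((diffF hφ c).continuous.continuousOn)
        ((diffF hφ c).differentiableOn)
      intro s hs
      rw [interior_Ici] at hs
      rw [(hasDerivF hφ c s).deriv]
      have h1 : 0 ≤ deriv (deriv φ) s - c := by
        have h0 := phi2_lb hφ hφ''' (le_of_lt hs)
        rw [hac] at h0
        nlinarith [mul_pos hρ2 (sub_pos.mpr (Set.mem_Ioi.mp hs))]
      have h2 : 0 < deriv φ s := lt_of_lt_of_le hρ1 (hφ' s)
      positivity
    exact hmono (Set.self_mem_Ici) h h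
  · have hmono : AntitoneOn (Ffun φ c) (Set.Iic ac) := by
      apply antitoneOn_of_deriv_nonpos (convex_Iic ac)
        ((diffF hφ c).continuous.continuousOn)
        ((diffF hφ c).differentiableOn)
      intro s hs
      rw [interior_Iic] at hs
      rw [(hasDerivF hφ c s).deriv]
      have h1 : deriv (deriv φ) s - c ≤ 0 := by
        have h0 := phi2_lb hφ hφ''' (le_of_lt hs)
        rw [hac] at h0
        nlinarith [mul_pos hρ2 (sub_pos.mpr (Set.mem_Iio.mp hs))]
      have h2 : 0 < deriv φ s := lt_of_lt_of_le hρ1 (hφ' s)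
      nlinarith
    exact hmono h (Set.self_mem_Iic) h

/-- Key upper bound on F_c gap, under β-smallness. -/
private lemma Fub (hφ : ContDiff ℝ (⊤ : ℕ∞) φ) (hρ1 : 0 < ρ1) (hρ2 : 0 < ρ2)
    (hφ' : ∀ z, ρ1 ≤ deriv φ z) (hφ''' : ∀ z, ρ2 ≤ deriv (deriv (deriv φ)) z)
    (hβ : 0 < β)
    (hnormal : ∀ z, β * |deriv (deriv φ) z| ≤ (deriv φ z) ^ 2 * deriv (deriv (deriv φ)) z)
    {c ac aj : ℝ} (hac : deriv (deriv φ) ac = c)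
    (hsmall : 2 * deriv φ aj * |deriv (deriv φ) aj - c| < β) :
    Ffun φ c aj - Ffun φ c ac ≤ 4 * deriv φ aj * (deriv (deriv φ) aj - c)^2 / ρ2 := by
  have hψj : 0 < deriv φ aj := lt_of_lt_of_le hρ1 (hφ' aj)
  rcases le_total ac aj with h | h
  · -- δ = κ(aj) - c ≥ 0
    set δ := deriv (deriv φ) aj - c with hδdef
    have hδ : 0 ≤ δ := by
      have := phi2_lb hφ hφ''' h; rw [hac] at this; nlinarith
    have hgap : aj - ac ≤ δ / ρ2 := by
      have := phi2_lb hφ hφ''' h; rw [hac] at this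
      rw [le_div_iff₀ hρ2]; nlinarith
    have habsδ : |deriv (deriv φ) aj - c| = δ := abs_of_nonneg hδ
    have hmono : MonotoneOn (fun s => 4 * deriv φ aj * δ * s - Ffun φ c s) (Set.Icc ac aj) := by
      apply monotoneOn_of_deriv_nonneg (convex_Icc ac aj)
      · exact (((differentiable_id.const_mul _).sub (diffF hφ c)).continuous.continuousOn)
      · exact ((differentiable_id.const_mul _).sub (diffF hφ c)).differentiableOn
      intro s hs
      rw [interior_Icc] at hs
      have hd : HasDerivAt (fun s => 4 * deriv φ aj * δ * s - Ffun φ c s)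
          (4 * deriv φ aj * δ - 2 * deriv φ s * (deriv (deriv φ) s - c)) s :=
        (hd_linear _ s).sub (hasDerivF hφ c s)
      rw [hd.deriv]
      -- on segment: 0 ≤ κ s - c ≤ δ and φ' s ≤ 2 ψj
      have h1 : 0 ≤ deriv (deriv φ) s - c := by
        have h0 := phi2_lb hφ hφ''' hs.1.le; rw [hac] at h0
        nlinarith [mul_pos hρ2 (sub_pos.mpr hs.1)]
      have h2 : deriv (deriv φ) s - c ≤ δ := by
        have h0 := phi2_lb hφ hφ''' hs.2.le
        nlinarith [mul_pos hρ2 (sub_pos.mpr hs.2)]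
      have h3 : deriv φ s ≤ 2 * deriv φ aj := by
        apply seg_bound hφ hρ1 hφ' hβ hnormal (δ := δ) _ (by rwa [habsδ] at hsmall)
        rw [abs_le]; constructor <;> nlinarith
      have hψs : 0 < deriv φ s := lt_of_lt_of_le hρ1 (hφ' s)
      nlinarith
    have := hmono (Set.left_mem_Icc.mpr h) (Set.right_mem_Icc.mpr h) h
    simp only at this
    have h4 : Ffun φ c aj - Ffun φ c ac ≤ 4 * deriv φ aj * δ * (aj - ac) := by linarith
    calc Ffun φ c aj - Ffun φ c ac ≤ 4 * deriv φ aj * δ * (aj - ac) := h4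
      _ ≤ 4 * deriv φ aj * δ * (δ / ρ2) := by
          apply mul_le_mul_of_nonneg_left hgap; positivity
      _ = 4 * deriv φ aj * δ^2 / ρ2 := by ring
  · -- aj ≤ ac, δ = c - κ(aj) ≥ 0
    set δ := c - deriv (deriv φ) aj with hδdef
    have hδ : 0 ≤ δ := by
      have := phi2_lb hφ hφ''' h; rw [hac] at this; nlinarith
    have hgap : ac - aj ≤ δ / ρ2 := by
      have := phi2_lb hφ hφ''' h; rw [hac] at this
      rw [le_div_iff₀ hρ2]; nlinarith
    have habsδ : |deriv (deriv φ) aj - c| = δ := by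
      rw [abs_sub_comm]; exact abs_of_nonneg hδ
    have hmono : MonotoneOn (fun s => 4 * deriv φ aj * δ * s + Ffun φ c s) (Set.Icc aj ac) := by
      apply monotoneOn_of_deriv_nonneg (convex_Icc aj ac)
      · exact (((differentiable_id.const_mul _).add (diffF hφ c)).continuous.continuousOn)
      · exact ((differentiable_id.const_mul _).add (diffF hφ c)).differentiableOn
      intro s hs
      rw [interior_Icc] at hs
      have hd : HasDerivAt (fun s => 4 * deriv φ aj * δ * s + Ffun φ c s)
          (4 * deriv φ aj * δ + 2 * deriv φ s * (deriv (deriv φ) s - c)) s :=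
        (hd_linear _ s).add (hasDerivF hφ c s)
      rw [hd.deriv]
      have h1 : deriv (deriv φ) s - c ≤ 0 := by
        have h0 := phi2_lb hφ hφ''' hs.2.le; rw [hac] at h0
        nlinarith [mul_pos hρ2 (sub_pos.mpr hs.2)]
      have h2 : -δ ≤ deriv (deriv φ) s - c := by
        have h0 := phi2_lb hφ hφ''' hs.1.le
        nlinarith [mul_pos hρ2 (sub_pos.mpr hs.1)]
      have h3 : deriv φ s ≤ 2 * deriv φ aj := by
        apply seg_bound hφ hρ1 hφ' hβ hnormal (δ := δ) _ (by rwa [habsδ] at hsmall)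
        rw [abs_le]; constructor <;> nlinarith
      have hψs : 0 < deriv φ s := lt_of_lt_of_le hρ1 (hφ' s)
      nlinarith
    have := hmono (Set.left_mem_Icc.mpr h) (Set.right_mem_Icc.mpr h) h
    simp only at this
    have h4 : Ffun φ c aj - Ffun φ c ac ≤ 4 * deriv φ aj * δ * (ac - aj) := by linarith
    calc Ffun φ c aj - Ffun φ c ac ≤ 4 * deriv φ aj * δ * (ac - aj) := h4
      _ ≤ 4 * deriv φ aj * δ * (δ / ρ2) := by
          apply mul_le_mul_of_nonneg_left hgap; positivity
      _ = 4 * deriv φ aj * (deriv (deriv φ) aj - c)^2 / ρ2 := by rw [hδdef]; ring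

/-- quadratic lower bound at ν with c = φ''(ν) -/
private lemma Flb (hφ : ContDiff ℝ (⊤ : ℕ∞) φ) (hρ1 : 0 < ρ1) (hρ2 : 0 < ρ2)
    (hφ' : ∀ z, ρ1 ≤ deriv φ z) (hφ''' : ∀ z, ρ2 ≤ deriv (deriv (deriv φ)) z)
    (ν a : ℝ) :
    ρ1 * ρ2 * (a - ν)^2 ≤ Ffun φ (deriv (deriv φ) ν) a - Ffun φ (deriv (deriv φ) ν) ν := by
  set c := deriv (deriv φ) ν with hc
  have hdiffH : Differentiable ℝ (fun s => Ffun φ c s - ρ1*ρ2*(s-ν)^2) := by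
    apply (diffF hφ c).sub
    apply Differentiable.const_mul
    exact (differentiable_id.sub_const ν).pow 2
  have hdH : ∀ s, HasDerivAt (fun s => Ffun φ c s - ρ1*ρ2*(s-ν)^2)
      (2 * deriv φ s * (deriv (deriv φ) s - c) - ρ1*ρ2*(2*(s-ν))) s := by
    intro s
    have h2 : HasDerivAt (fun s : ℝ => ρ1*ρ2*(s-ν)^2) (ρ1*ρ2*(2*(s-ν))) s := by
      have hb : HasDerivAt (fun s : ℝ => (s-ν)^2) ((2:ℕ)*(s-ν)^1*1) s :=
        ((hasDerivAt_id s).sub_const ν).fun_pow 2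
      have := hb.const_mul (ρ1*ρ2)
      refine this.congr_deriv ?_
      push_cast; ring
    exact (hasDerivF hφ c s).sub h2
  rcases le_total ν a with h | h
  · have hmono : MonotoneOn (fun s => Ffun φ c s - ρ1*ρ2*(s-ν)^2) (Set.Ici ν) := by
      apply monotoneOn_of_deriv_nonneg (convex_Ici ν) (hdiffH.continuous.continuousOn)
        hdiffH.differentiableOn
      intro s hs
      rw [interior_Ici] at hs
      rw [(hdH s).deriv]
      have h1 : ρ2 * (s - ν) ≤ deriv (deriv φ) s - c := phi2_lb hφ hφ''' hs.le
      have h2 : ρ1 ≤ deriv φ s := hφ' s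
      have hsν : 0 ≤ s - ν := by
        have := Set.mem_Ioi.mp hs; linarith
      have hκ : 0 ≤ deriv (deriv φ) s - c := le_trans (mul_nonneg hρ2.le hsν) h1
      nlinarith [mul_le_mul_of_nonneg_right h2 hκ, mul_le_mul_of_nonneg_left h1 hρ1.le]
    have := hmono (Set.self_mem_Ici) h h
    simp at this
    nlinarith [this]
  · have hanti : AntitoneOn (fun s => Ffun φ c s - ρ1*ρ2*(s-ν)^2) (Set.Iic ν) := by
      apply antitoneOn_of_deriv_nonpos (convex_Iic ν) (hdiffH.continuous.continuousOn)
        hdiffH.differentiableOn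
      intro s hs
      rw [interior_Iic] at hs
      rw [(hdH s).deriv]
      have h1 : ρ2 * (ν - s) ≤ c - deriv (deriv φ) s := phi2_lb hφ hφ''' (le_of_lt hs)
      have h2 : ρ1 ≤ deriv φ s := hφ' s
      have hsν : 0 ≤ ν - s := by
        have := Set.mem_Iio.mp hs; linarith
      have h3 : deriv (deriv φ) s - c ≤ 0 := by nlinarith [mul_nonneg hρ2.le hsν]
      have h4 : 2 * deriv φ s * (deriv (deriv φ) s - c) ≤ 2 * ρ1 * (deriv (deriv φ) s - c) := by
        nlinarith
      nlinarith [mul_le_mul_of_nonneg_left h1 hρ1.le]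
    have := hanti h (Set.self_mem_Iic) h
    simp at this
    nlinarith [this]

/-- surjectivity of φ'' -/
private lemma phi2_surj (hφ : ContDiff ℝ (⊤ : ℕ∞) φ) (hρ2 : 0 < ρ2)
    (hφ''' : ∀ z, ρ2 ≤ deriv (deriv (deriv φ)) z) (c : ℝ) :
    ∃ ac, deriv (deriv φ) ac = c := by
  have hcont : Continuous (deriv (deriv φ)) := (diff3 hφ).continuous
  rcases le_total (deriv (deriv φ) 0) c with h | h
  · set z1 := (c - deriv (deriv φ) 0)/ρ2 with hz1
    have hz1nn : 0 ≤ z1 := div_nonneg (by linarith) hρ2.le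
    have hge : c ≤ deriv (deriv φ) z1 := by
      have h0 := phi2_lb hφ hφ''' hz1nn
      have h1 : ρ2 * z1 ≤ deriv (deriv φ) z1 - deriv (deriv φ) 0 := by
        simpa using h0
      rw [hz1, mul_div_cancel₀ _ hρ2.ne'] at h1
      linarith
    have := intermediate_value_Icc hz1nn hcont.continuousOn
    have hmem : c ∈ Set.Icc (deriv (deriv φ) 0) (deriv (deriv φ) z1) := ⟨h, hge⟩
    obtain ⟨ac, _, hac⟩ := this hmem
    exact ⟨ac, hac⟩
  · set z1 := (c - deriv (deriv φ) 0)/ρ2 with hz1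
    have hz1np : z1 ≤ 0 := by
      apply div_nonpos_of_nonpos_of_nonneg <;> linarith
    have hle : deriv (deriv φ) z1 ≤ c := by
      have h0 := phi2_lb hφ hφ''' hz1np
      have : ρ2 * (0 - z1) ≤ deriv (deriv φ) 0 - deriv (deriv φ) z1 := h0
      rw [hz1] at this
      have h2 : ρ2 * ((c - deriv (deriv φ) 0)/ρ2) = c - deriv (deriv φ) 0 := by
        rw [mul_div_cancel₀]; exact hρ2.ne'
      nlinarith [this]
    have := intermediate_value_Icc hz1np hcont.continuousOn
    have hmem : c ∈ Set.Icc (deriv (deriv φ) z1) (deriv (deriv φ) 0) := ⟨hle, h⟩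
    obtain ⟨ac, _, hac⟩ := this hmem
    exact ⟨ac, hac⟩

end OneD3

section OneD4

variable {φ : ℝ → ℝ} {ρ1 ρ2 β : ℝ}

/-- Per-data-point key inequality: for any c,
    min(β², ρ1ρ2 (Σ φ'(a_j)² - m φ'(ν)²)) ≤ Σ (2 φ'(a_j)(φ''(a_j) - c))². -/
private lemma key1d (hφ : ContDiff ℝ (⊤ : ℕ∞) φ) (hρ1 : 0 < ρ1) (hρ2 : 0 < ρ2)
    (hφ' : ∀ z, ρ1 ≤ deriv φ z) (hφ''' : ∀ z, ρ2 ≤ deriv (deriv (deriv φ)) z)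
    (hβ : 0 < β)
    (hnormal : ∀ z, β * |deriv (deriv φ) z| ≤ (deriv φ z) ^ 2 * deriv (deriv (deriv φ)) z)
    {m : ℕ} (a : Fin m → ℝ) (ν c : ℝ)
    (hcon : ∑ j, φ (a j) = (m : ℝ) * φ ν) :
    min (β^2) (ρ1 * ρ2 * ((∑ j, (deriv φ (a j))^2) - (m:ℝ) * (deriv φ ν)^2))
      ≤ ∑ j, (2 * deriv φ (a j) * (deriv (deriv φ) (a j) - c))^2 := by
  set A := ∑ j, (2 * deriv φ (a j) * (deriv (deriv φ) (a j) - c))^2 with hA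
  by_cases hcase : β^2 ≤ A
  · exact le_trans (min_le_left _ _) hcase
  push_neg at hcase
  -- identity: Q = Σ_j (F_c(a_j) - F_c(ν))
  have hQid : (∑ j, (deriv φ (a j))^2) - (m:ℝ) * (deriv φ ν)^2
      = ∑ j, (Ffun φ c (a j) - Ffun φ c ν) := by
    simp only [Ffun]
    rw [Finset.sum_sub_distrib]
    rw [Finset.sum_sub_distrib]
    rw [← Finset.mul_sum, hcon]
    simp [Finset.sum_const, Finset.card_univ]
    ring
  obtain ⟨ac, hac⟩ := phi2_surj hφ hρ2 hφ''' c
  -- termwise bound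
  have hterm : ∀ j, Ffun φ c (a j) - Ffun φ c ν
      ≤ (2 * deriv φ (a j) * (deriv (deriv φ) (a j) - c))^2 / (ρ1 * ρ2) := by
    intro j
    have hψj : 0 < deriv φ (a j) := lt_of_lt_of_le hρ1 (hφ' (a j))
    -- smallness from term ≤ A < β²
    have hsq : (2 * deriv φ (a j) * (deriv (deriv φ) (a j) - c))^2 ≤ A := by
      rw [hA]
      apply Finset.single_le_sum (f := fun j => (2 * deriv φ (a j) * (deriv (deriv φ) (a j) - c))^2)
        (fun k _ => sq_nonneg _) (Finset.mem_univ j)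
    have hsmall : 2 * deriv φ (a j) * |deriv (deriv φ) (a j) - c| < β := by
      have h1 : (2 * deriv φ (a j) * |deriv (deriv φ) (a j) - c|)^2 < β^2 := by
        calc (2 * deriv φ (a j) * |deriv (deriv φ) (a j) - c|)^2
            = (2 * deriv φ (a j) * (deriv (deriv φ) (a j) - c))^2 := by
              rw [mul_pow, mul_pow, sq_abs]; ring
          _ ≤ A := hsq
          _ < β^2 := hcase
      have h2 : 0 ≤ 2 * deriv φ (a j) * |deriv (deriv φ) (a j) - c| := by positivity
      nlinarith
    have h3 := Fub hφ hρ1 hρ2 hφ' hφ''' hβ hnormal hac hsmall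
    have h4 := Fmin hφ hρ1 hρ2 hφ' hφ''' hac ν
    have h5 : Ffun φ c (a j) - Ffun φ c ν ≤ 4 * deriv φ (a j) * (deriv (deriv φ) (a j) - c)^2 / ρ2 := by
      linarith
    apply le_trans h5
    rw [div_le_div_iff₀ hρ2 (by positivity)]
    have h6 : ρ1 ≤ deriv φ (a j) := hφ' (a j)
    have h7 : 0 ≤ 4 * deriv φ (a j) * (deriv (deriv φ) (a j) - c)^2 * ρ2 := by positivity
    nlinarith [mul_le_mul_of_nonneg_right h6 h7]
  -- sum up
  have hQ : (∑ j, (deriv φ (a j))^2) - (m:ℝ) * (deriv φ ν)^2 ≤ A / (ρ1 * ρ2) := by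
    rw [hQid]
    calc ∑ j, (Ffun φ c (a j) - Ffun φ c ν)
        ≤ ∑ j, (2 * deriv φ (a j) * (deriv (deriv φ) (a j) - c))^2 / (ρ1 * ρ2) :=
          Finset.sum_le_sum (fun j _ => hterm j)
      _ = A / (ρ1 * ρ2) := by rw [hA, ← Finset.sum_div]
  have hmin : ρ1 * ρ2 * ((∑ j, (deriv φ (a j))^2) - (m:ℝ) * (deriv φ ν)^2) ≤ A := by
    have hpos : 0 < ρ1 * ρ2 := mul_pos hρ1 hρ2
    rw [mul_comm]
    rw [← le_div_iff₀ hpos]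
    exact hQ
  exact le_trans (min_le_right _ _) hmin

/-- lower bound: the per-data-point excess dominates ρ1ρ2 (a_J - ν)². -/
private lemma lb1d (hφ : ContDiff ℝ (⊤ : ℕ∞) φ) (hρ1 : 0 < ρ1) (hρ2 : 0 < ρ2)
    (hφ' : ∀ z, ρ1 ≤ deriv φ z) (hφ''' : ∀ z, ρ2 ≤ deriv (deriv (deriv φ)) z)
    {m : ℕ} (a : Fin m → ℝ) (ν : ℝ)
    (hcon : ∑ j, φ (a j) = (m : ℝ) * φ ν) (J : Fin m) :
    ρ1 * ρ2 * (a J - ν)^2 ≤ (∑ j, (deriv φ (a j))^2) - (m:ℝ) * (deriv φ ν)^2 := by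
  set c := deriv (deriv φ) ν with hc
  have hQid : (∑ j, (deriv φ (a j))^2) - (m:ℝ) * (deriv φ ν)^2
      = ∑ j, (Ffun φ c (a j) - Ffun φ c ν) := by
    simp only [Ffun]
    rw [Finset.sum_sub_distrib, Finset.sum_sub_distrib, ← Finset.mul_sum, hcon]
    simp [Finset.sum_const, Finset.card_univ]
    ring
  rw [hQid]
  have hterm : ∀ j, ρ1 * ρ2 * (a j - ν)^2 ≤ Ffun φ c (a j) - Ffun φ c ν :=
    fun j => Flb hφ hρ1 hρ2 hφ' hφ''' ν (a j)
  calc ρ1 * ρ2 * (a J - ν)^2 ≤ Ffun φ c (a J) - Ffun φ c ν := hterm J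
    _ ≤ ∑ j, (Ffun φ c (a j) - Ffun φ c ν) := by
        apply Finset.single_le_sum (f := fun j => Ffun φ c (a j) - Ffun φ c ν)
          (fun k _ => le_trans (by positivity) (hterm k)) (Finset.mem_univ J)

/-- nonnegativity of the per-data-point excess (m ≥ 1). -/
private lemma nonneg1d (hφ : ContDiff ℝ (⊤ : ℕ∞) φ) (hρ1 : 0 < ρ1) (hρ2 : 0 < ρ2)
    (hφ' : ∀ z, ρ1 ≤ deriv φ z) (hφ''' : ∀ z, ρ2 ≤ deriv (deriv (deriv φ)) z)
    {m : ℕ} (hm : 1 ≤ m) (a : Fin m → ℝ) (ν : ℝ)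
    (hcon : ∑ j, φ (a j) = (m : ℝ) * φ ν) :
    0 ≤ (∑ j, (deriv φ (a j))^2) - (m:ℝ) * (deriv φ ν)^2 := by
  have J : Fin m := ⟨0, hm⟩
  have h1 := lb1d hφ hρ1 hρ2 hφ' hφ''' a ν hcon J
  have h0 : 0 ≤ ρ1 * ρ2 * (a J - ν)^2 := by positivity
  linarith

end OneD4

section Geom

variable {n m d : ℕ}

/-- the synthesis map c ↦ Σ c_i x_i -/
private def Tmap (x : Fin n → EuclideanSpace ℝ (Fin d)) : (Fin n → ℝ) →ₗ[ℝ] EuclideanSpace ℝ (Fin d) where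
  toFun c := ∑ k, c k • x k
  map_add' a b := by
    simp [add_smul, Finset.sum_add_distrib]
  map_smul' r a := by
    simp [smul_smul, Finset.smul_sum]

private def Bmap (x : Fin n → EuclideanSpace ℝ (Fin d)) : (Fin n → ℝ) →ₗ[ℝ] (Fin n → ℝ) :=
  (LinearMap.pi fun i => (innerSL ℝ (x i)).toLinearMap).comp (Tmap x)

private lemma Bmap_apply (x : Fin n → EuclideanSpace ℝ (Fin d)) (c : Fin n → ℝ) (i : Fin n) :
    Bmap x c i = ⟪x i, ∑ k, c k • x k⟫ := rfl

private lemma Bmap_surj {μ : ℝ} (hμ : 0 < μ)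
    (x : Fin n → EuclideanSpace ℝ (Fin d))
    (hcoh : ∀ c : Fin n → ℝ, μ * ∑ i, (c i) ^ 2 ≤ ‖∑ i, c i • x i‖ ^ 2) :
    Function.Surjective (Bmap x) := by
  rw [← LinearMap.injective_iff_surjective]
  rw [injective_iff_map_eq_zero]
  intro cc hcc
  have h0 : ∀ i, ⟪x i, ∑ k, cc k • x k⟫ = (0:ℝ) := fun i => congrFun hcc i
  have h1 : ‖∑ k, cc k • x k‖^2 = 0 := by
    rw [← real_inner_self_eq_norm_sq]
    rw [sum_inner]
    apply Finset.sum_eq_zero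
    intro k _
    rw [real_inner_smul_left, h0 k, mul_zero]
  have h2 := hcoh cc
  rw [h1] at h2
  have h3 : ∑ i, (cc i)^2 ≤ 0 := by
    by_contra hcon
    push_neg at hcon
    nlinarith
  funext i
  have h4 : (cc i)^2 ≤ 0 := by
    have h5 := Finset.single_le_sum (f := fun i => (cc i)^2) (fun k _ => sq_nonneg _)
      (Finset.mem_univ i)
    linarith
  have h5 : (cc i)^2 = 0 := le_antisymm h4 (sq_nonneg _)
  exact pow_eq_zero_iff two_ne_zero |>.mp h5

end Geom

section Geom2

variable {n m d : ℕ}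

/-- test-vector lower bound for the Riemannian gradient norm -/
private lemma testvec
    (x : Fin n → EuclideanSpace ℝ (Fin d))
    {μ : ℝ} (hμ : 0 < μ)
    (hcoh : ∀ c : Fin n → ℝ, μ * ∑ i, (c i) ^ 2 ≤ ‖∑ i, c i • x i‖ ^ 2)
    (φ : ℝ → ℝ) (θ : Param m d)
    (p : Fin n → Fin m → ℝ) (lam : Fin n → ℝ)
    (hdecomp : ∀ i j, 2 * deriv φ ⟪θ j, x i⟫ * deriv (deriv φ) ⟪θ j, x i⟫
      = p i j + lam i * deriv φ ⟪θ j, x i⟫)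
    (hkern : ∀ i, ∑ j, deriv φ ⟪θ j, x i⟫ * p i j = 0) :
    μ * (∑ i, ∑ j, (p i j)^2) ≤ ‖rgradG φ x θ‖^2 := by
  set Sp := ∑ i, ∑ j, (p i j)^2 with hSp
  have hSpnn : 0 ≤ Sp := Finset.sum_nonneg fun i _ => Finset.sum_nonneg fun j _ => sq_nonneg _
  -- solve for q
  obtain ⟨q, hq⟩ : ∃ q : Fin m → Fin n → ℝ, ∀ j, Bmap x (q j) = fun i => p i j := by
    have hsurj := Bmap_surj hμ x hcoh
    choose qq hqq using fun j => hsurj (fun i => p i j)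
    exact ⟨qq, hqq⟩
  set w : Param m d := WithLp.toLp 2 (fun j => ∑ k, q j k • x k) with hw
  have hwx : ∀ i j, ⟪x i, w j⟫ = p i j := by
    intro i j
    have := congrFun (hq j) i
    rw [Bmap_apply] at this
    exact this
  have hxw : ∀ i j, ⟪w j, x i⟫ = p i j := fun i j => by
    rw [real_inner_comm]; exact hwx i j
  -- kernel membership
  have hker : w ∈ LinearMap.ker (jacobian φ x θ) := by
    rw [LinearMap.mem_ker]
    funext i
    show ⟪gradF φ x i θ, w⟫ = (0 : ℝ)
    rw [PiLp.inner_apply]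
    have : ∀ j, ⟪gradF φ x i θ j, w j⟫ = deriv φ ⟪θ j, x i⟫ * p i j := by
      intro j
      show ⟪(deriv φ ⟪θ j, x i⟫) • x i, w j⟫ = _
      rw [real_inner_smul_left, hwx i j]
    rw [Finset.sum_congr rfl (fun j _ => this j)]
    exact hkern i
  -- block norms
  have hblock : ∀ j, ‖w j‖^2 = ∑ k, q j k * p k j := by
    intro j
    rw [← real_inner_self_eq_norm_sq]
    show ⟪∑ k, q j k • x k, w j⟫ = _
    rw [sum_inner]
    apply Finset.sum_congr rfl
    intro k _
    rw [real_inner_smul_left, hwx k j]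
  have hblock_le : ∀ j, ‖w j‖^2 ≤ (∑ k, (p k j)^2) / μ := by
    intro j
    have hc := hcoh (q j)
    have hcs := Finset.sum_mul_sq_le_sq_mul_sq Finset.univ (fun k => q j k) (fun k => p k j)
    rw [hblock j]
    have hqq : μ * ∑ k, (q j k)^2 ≤ ∑ k, q j k * p k j := by
      rw [← hblock j]; exact hc
    set D := ∑ k, q j k * p k j with hD
    set Sq := ∑ k, (q j k)^2 with hSq
    set Spj := ∑ k, (p k j)^2 with hSpj
    have hSqnn : 0 ≤ Sq := Finset.sum_nonneg fun k _ => sq_nonneg _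
    have hSpjnn : 0 ≤ Spj := Finset.sum_nonneg fun k _ => sq_nonneg _
    have hDnn : 0 ≤ D := le_trans (by positivity) hqq
    rw [le_div_iff₀ hμ]
    -- D² ≤ Sq * Spj and μ Sq ≤ D ⇒ D μ ≤ Spj
    rcases eq_or_lt_of_le hDnn with hD0 | hD0
    · rw [← hD0]; simpa using hSpjnn
    · nlinarith
  -- total norm
  have hnormw : ‖w‖^2 ≤ Sp / μ := by
    have h1 : ‖w‖^2 = ∑ j, ‖w j‖^2 := by
      rw [← real_inner_self_eq_norm_sq, PiLp.inner_apply]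
      apply Finset.sum_congr rfl
      intro j _
      rw [real_inner_self_eq_norm_sq]
    rw [h1]
    calc ∑ j, ‖w j‖^2 ≤ ∑ j, (∑ k, (p k j)^2) / μ := Finset.sum_le_sum fun j _ => hblock_le j
      _ = (∑ j, ∑ k, (p k j)^2) / μ := by rw [Finset.sum_div]
      _ = Sp / μ := by rw [hSp, Finset.sum_comm]
  -- inner product with gradRegG
  have hip : ⟪gradRegG φ x θ, w⟫ = Sp := by
    rw [PiLp.inner_apply]
    have h1 : ∀ j, ⟪gradRegG φ x θ j, w j⟫
        = ∑ i, (2 * deriv φ ⟪θ j, x i⟫ * deriv (deriv φ) ⟪θ j, x i⟫) * p i j := by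
      intro j
      show ⟪∑ i, (2 * deriv φ ⟪θ j, x i⟫ * deriv (deriv φ) ⟪θ j, x i⟫) • x i, w j⟫ = _
      rw [sum_inner]
      apply Finset.sum_congr rfl
      intro i _
      rw [real_inner_smul_left, hwx i j]
    rw [Finset.sum_congr rfl (fun j _ => h1 j), Finset.sum_comm]
    rw [hSp]
    apply Finset.sum_congr rfl
    intro i _
    have h2 : ∀ j, (2 * deriv φ ⟪θ j, x i⟫ * deriv (deriv φ) ⟪θ j, x i⟫) * p i j
        = (p i j)^2 + lam i * (deriv φ ⟪θ j, x i⟫ * p i j) := by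
      intro j
      rw [hdecomp i j]; ring
    rw [Finset.sum_congr rfl (fun j _ => h2 j), Finset.sum_add_distrib, ← Finset.mul_sum,
      hkern i, mul_zero, add_zero]
  -- orthogonal projection step
  have horth : ⟪gradRegG φ x θ - rgradG φ x θ, w⟫ = (0:ℝ) :=
    Submodule.starProjection_inner_eq_zero (gradRegG φ x θ) w hker
  have hrw : ⟪rgradG φ x θ, w⟫ = Sp := by
    rw [inner_sub_left] at horth
    rw [← hip]; linarith [horth]
  have hcs2 : Sp ≤ ‖rgradG φ x θ‖ * ‖w‖ := by
    rw [← hrw]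
    exact real_inner_le_norm _ _
  rcases eq_or_lt_of_le hSpnn with hSp0 | hSp0
  · rw [← hSp0, mul_zero]; positivity
  · have hnn1 : 0 ≤ ‖rgradG φ x θ‖ := norm_nonneg _
    have hnn2 : 0 ≤ ‖w‖ := norm_nonneg _
    have h6 : Sp^2 ≤ ‖rgradG φ x θ‖^2 * ‖w‖^2 := by nlinarith
    have h7 : ‖rgradG φ x θ‖^2 * ‖w‖^2 ≤ ‖rgradG φ x θ‖^2 * (Sp/μ) := by
      apply mul_le_mul_of_nonneg_left hnormw (by positivity)
    have h8 : Sp^2 ≤ ‖rgradG φ x θ‖^2 * (Sp/μ) := le_trans h6 h7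
    have h8' : Sp^2 ≤ (‖rgradG φ x θ‖^2 * Sp)/μ := by rw [mul_div_assoc]; exact h8
    have h9 : Sp^2 * μ ≤ ‖rgradG φ x θ‖^2 * Sp := (le_div_iff₀ hμ).mp h8'
    nlinarith [h9]

end Geom2


section PL

variable {n m d : ℕ}

private lemma PLbound (hm : 1 ≤ m)
    (x : Fin n → EuclideanSpace ℝ (Fin d))
    {μ : ℝ} (hμ : 0 < μ)
    (hcoh : ∀ c : Fin n → ℝ, μ * ∑ i, (c i) ^ 2 ≤ ‖∑ i, c i • x i‖ ^ 2)
    {φ : ℝ → ℝ} (hφ : ContDiff ℝ (⊤ : ℕ∞) φ)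
    {ρ1 ρ2 : ℝ} (hρ1 : 0 < ρ1) (hρ2 : 0 < ρ2)
    (hφ' : ∀ z, ρ1 ≤ deriv φ z)
    (hφ''' : ∀ z, ρ2 ≤ deriv (deriv (deriv φ)) z)
    {β : ℝ} (hβ : 0 < β)
    (hnormal : ∀ z, β * |deriv (deriv φ) z| ≤ (deriv φ z) ^ 2 * deriv (deriv (deriv φ)) z)
    (ν : Fin n → ℝ) (θ : Param m d)
    (hzero : ∀ i, ∑ j, φ ⟪θ j, x i⟫ = (m:ℝ) * φ (ν i)) :
    μ * min (β^2) (ρ1 * ρ2 * (regG φ x θ - ∑ i, (m:ℝ) * (deriv φ (ν i))^2))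
      ≤ ‖rgradG φ x θ‖^2 := by
  have hden : ∀ i, 0 < ∑ j, (deriv φ ⟪θ j, x i⟫)^2 := by
    intro i
    apply Finset.sum_pos
    · intro j _
      exact pow_pos (lt_of_lt_of_le hρ1 (hφ' ⟪θ j, x i⟫)) 2
    · exact ⟨⟨0, hm⟩, Finset.mem_univ _⟩
  set cc : Fin n → ℝ := fun i =>
    (∑ j, (deriv φ ⟪θ j, x i⟫)^2 * deriv (deriv φ) ⟪θ j, x i⟫)
      / (∑ j, (deriv φ ⟪θ j, x i⟫)^2) with hcc
  have hkern : ∀ i, ∑ j, deriv φ ⟪θ j, x i⟫ *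
      (2 * deriv φ ⟪θ j, x i⟫ * (deriv (deriv φ) ⟪θ j, x i⟫ - cc i)) = 0 := by
    intro i
    have h1 : ∑ j, deriv φ ⟪θ j, x i⟫ *
        (2 * deriv φ ⟪θ j, x i⟫ * (deriv (deriv φ) ⟪θ j, x i⟫ - cc i))
        = 2 * (∑ j, (deriv φ ⟪θ j, x i⟫)^2 * deriv (deriv φ) ⟪θ j, x i⟫)
          - (2 * cc i) * (∑ j, (deriv φ ⟪θ j, x i⟫)^2) := by
      rw [Finset.mul_sum, Finset.mul_sum, ← Finset.sum_sub_distrib]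
      apply Finset.sum_congr rfl
      intro j _
      ring
    have h2 : cc i * (∑ j, (deriv φ ⟪θ j, x i⟫)^2)
        = ∑ j, (deriv φ ⟪θ j, x i⟫)^2 * deriv (deriv φ) ⟪θ j, x i⟫ := by
      rw [hcc]
      exact div_mul_cancel₀ _ (hden i).ne'
    rw [h1, ← h2]
    ring
  have htv := testvec x hμ hcoh φ θ
    (fun i j => 2 * deriv φ ⟪θ j, x i⟫ * (deriv (deriv φ) ⟪θ j, x i⟫ - cc i))
    (fun i => 2 * cc i)
    (fun i j => by ring)
    hkern
  refine le_trans ?_ htv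
  apply mul_le_mul_of_nonneg_left _ hμ.le
  -- key1d per i
  have hQi : ∀ i, min (β^2)
      (ρ1 * ρ2 * ((∑ j, (deriv φ ⟪θ j, x i⟫)^2) - (m:ℝ) * (deriv φ (ν i))^2))
      ≤ ∑ j, (2 * deriv φ ⟪θ j, x i⟫ * (deriv (deriv φ) ⟪θ j, x i⟫ - cc i))^2 := by
    intro i
    exact key1d hφ hρ1 hρ2 hφ' hφ''' hβ hnormal (fun j => ⟪θ j, x i⟫) (ν i) (cc i) (hzero i)
  have hQnn : ∀ i, 0 ≤ (∑ j, (deriv φ ⟪θ j, x i⟫)^2) - (m:ℝ) * (deriv φ (ν i))^2 := by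
    intro i
    exact nonneg1d hφ hρ1 hρ2 hφ' hφ''' hm (fun j => ⟪θ j, x i⟫) (ν i) (hzero i)
  have hGdecomp : regG φ x θ - ∑ i, (m:ℝ) * (deriv φ (ν i))^2
      = ∑ i, ((∑ j, (deriv φ ⟪θ j, x i⟫)^2) - (m:ℝ) * (deriv φ (ν i))^2) := by
    rw [Finset.sum_sub_distrib]
    rfl
  by_cases hbig : ∃ i0, β^2 ≤ ρ1 * ρ2 *
      ((∑ j, (deriv φ ⟪θ j, x i0⟫)^2) - (m:ℝ) * (deriv φ (ν i0))^2)
  · obtain ⟨i0, hi0⟩ := hbig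
    have h2 : β^2 ≤ ∑ j, (2 * deriv φ ⟪θ j, x i0⟫ * (deriv (deriv φ) ⟪θ j, x i0⟫ - cc i0))^2 := by
      have := hQi i0
      rw [min_eq_left hi0] at this
      exact this
    calc min (β^2) (ρ1 * ρ2 * (regG φ x θ - ∑ i, (m:ℝ) * (deriv φ (ν i))^2))
        ≤ β^2 := min_le_left _ _
      _ ≤ ∑ j, (2 * deriv φ ⟪θ j, x i0⟫ * (deriv (deriv φ) ⟪θ j, x i0⟫ - cc i0))^2 := h2
      _ ≤ ∑ i, ∑ j, (2 * deriv φ ⟪θ j, x i⟫ * (deriv (deriv φ) ⟪θ j, x i⟫ - cc i))^2 := by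
          apply Finset.single_le_sum
            (f := fun i => ∑ j, (2 * deriv φ ⟪θ j, x i⟫ * (deriv (deriv φ) ⟪θ j, x i⟫ - cc i))^2)
            (fun k _ => Finset.sum_nonneg fun j _ => sq_nonneg _) (Finset.mem_univ i0)
  · push_neg at hbig
    calc min (β^2) (ρ1 * ρ2 * (regG φ x θ - ∑ i, (m:ℝ) * (deriv φ (ν i))^2))
        ≤ ρ1 * ρ2 * (regG φ x θ - ∑ i, (m:ℝ) * (deriv φ (ν i))^2) := min_le_right _ _
      _ = ∑ i, ρ1 * ρ2 * ((∑ j, (deriv φ ⟪θ j, x i⟫)^2) - (m:ℝ) * (deriv φ (ν i))^2) := by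
          rw [hGdecomp, Finset.mul_sum]
      _ ≤ ∑ i, ∑ j, (2 * deriv φ ⟪θ j, x i⟫ * (deriv (deriv φ) ⟪θ j, x i⟫ - cc i))^2 := by
          apply Finset.sum_le_sum
          intro i _
          have := hQi i
          rw [min_eq_right (le_of_lt (hbig i))] at this
          exact this

end PL

set_option maxHeartbeats 1000000 in
theorem stmt_16
    (n m d : ℕ) (hn : 1 ≤ n) (hm : 1 ≤ m) (hd : 1 ≤ d)
    (x : Fin n → EuclideanSpace ℝ (Fin d)) (hx : ∀ i, ‖x i‖ = 1)
    (μ : ℝ) (hμ : 0 < μ)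
    (hcoh : ∀ c : Fin n → ℝ, μ * ∑ i, (c i) ^ 2 ≤ ‖∑ i, c i • x i‖ ^ 2)
    (y : Fin n → ℝ)
    (φ : ℝ → ℝ) (hφ : ContDiff ℝ (⊤ : ℕ∞) φ)
    (ρ1 ρ2 : ℝ) (hρ1 : 0 < ρ1) (hρ2 : 0 < ρ2)
    (hφ' : ∀ z, ρ1 ≤ deriv φ z)
    (hφ''' : ∀ z, ρ2 ≤ deriv (deriv (deriv φ)) z)
    (β : ℝ) (hβ : 0 < β)
    (hnormal : ∀ z, β * |deriv (deriv φ) z| ≤ (deriv φ z) ^ 2 * deriv (deriv (deriv φ)) z)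
    (θt : ℝ → Param m d)
    (hmem : ∀ t, 0 ≤ t → ∀ i, netF φ x i (θt t) = y i)
    (hflow : ∀ t, 0 ≤ t → HasDerivAt θt (-(rgradG φ x (θt t))) t)
    (ν : Fin n → ℝ) (hν : ∀ i, φ (ν i) = y i / (m : ℝ)) :
    ∀ ε : ℝ, 0 < ε → ∀ t : ℝ,
      regG φ x (θt 0) / (μ * β ^ 2)
          + Real.log (max (β ^ 2 / (ρ1 ^ 2 * ρ2 ^ 2 * ε ^ 2)) 1) / (ρ1 * ρ2 * μ) ≤ t →
      ∀ i j, |⟪θt t j, x i⟫ - ν i| ≤ ε := by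
  intro ε hε t ht i0 j0
  have hmR : (0:ℝ) < (m:ℝ) := by exact_mod_cast hm
  set Gfun : ℝ → ℝ := fun s => regG φ x (θt s) with hGfun
  set Gstar : ℝ := ∑ i, (m:ℝ) * (deriv φ (ν i))^2 with hGstar
  set k : ℝ := ρ1 * ρ2 * μ with hk
  set T1 : ℝ := regG φ x (θt 0) / (μ * β^2) with hT1
  set C : ℝ := β^2 / (ρ1^2 * ρ2^2 * ε^2) with hC
  set θ0 : ℝ := β^2 / (ρ1 * ρ2) with hθ0
  have hkpos : 0 < k := by rw [hk]; positivity
  have hθ0pos : 0 < θ0 := by rw [hθ0]; positivity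
  -- zero-loss constraint in the needed form
  have hzero : ∀ s, 0 ≤ s → ∀ i, ∑ j, φ ⟪θt s j, x i⟫ = (m:ℝ) * φ (ν i) := by
    intro s hs i
    have h1 : netF φ x i (θt s) = y i := hmem s hs i
    have h2 : (∑ j, φ ⟪θt s j, x i⟫) = y i := h1
    rw [h2, hν i]
    field_simp
  -- positivity of G(0)
  have hG0pos : 0 < regG φ x (θt 0) := by
    apply Finset.sum_pos
    · intro i _
      apply Finset.sum_pos
      · intro j _
        exact pow_pos (lt_of_lt_of_le hρ1 (hφ' _)) 2
      · exact ⟨⟨0, hm⟩, Finset.mem_univ _⟩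
    · exact ⟨⟨0, hn⟩, Finset.mem_univ _⟩
  have hT1pos : 0 < T1 := by rw [hT1]; positivity
  have hGstar_nn : 0 ≤ Gstar := by
    rw [hGstar]
    apply Finset.sum_nonneg
    intro i _
    positivity
  -- nonnegativity of the excess
  have hh_nn : ∀ s, 0 ≤ s → 0 ≤ Gfun s - Gstar := by
    intro s hs
    have h1 : Gfun s - Gstar = ∑ i, ((∑ j, (deriv φ ⟪θt s j, x i⟫)^2) - (m:ℝ) * (deriv φ (ν i))^2) := by
      rw [Finset.sum_sub_distrib]
      rfl
    rw [h1]
    apply Finset.sum_nonneg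
    intro i _
    exact nonneg1d hφ hρ1 hρ2 hφ' hφ''' hm (fun j => ⟪θt s j, x i⟫) (ν i) (hzero s hs i)
  -- derivative of G along the flow
  have hDG : ∀ s, 0 ≤ s → HasDerivAt Gfun (-‖rgradG φ x (θt s)‖^2) s := by
    intro s hs
    set Ds : Param m d := -(rgradG φ x (θt s)) with hDs
    -- derivative of each inner product
    have hstep : ∀ (i : Fin n) (j : Fin m),
        HasDerivAt (fun r => ⟪θt r j, x i⟫) (⟪x i, Ds j⟫) s := by
      intro i j
      set w0 : Param m d := WithLp.toLp 2 (Pi.single j (x i)) with hw0def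
      have hw0 : ∀ v : Param m d, ⟪w0, v⟫ = ⟪x i, v j⟫ := by
        intro v
        rw [PiLp.inner_apply]
        rw [Finset.sum_eq_single j]
        · rw [hw0def]
          simp [Pi.single_eq_same]
        · intro k _ hkj
          rw [hw0def]
          simp [Pi.single_eq_of_ne hkj]
        · intro hj
          exact absurd (Finset.mem_univ j) hj
      have h1 : HasDerivAt (fun r => (innerSL ℝ w0) (θt r)) ((innerSL ℝ w0) Ds) s :=
        (innerSL ℝ w0).hasFDerivAt.comp_hasDerivAt s (hflow s hs)
      have h2 : (fun r => (innerSL ℝ w0) (θt r)) = (fun r => ⟪θt r j, x i⟫) := by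
        funext r
        show ⟪w0, θt r⟫ = _
        rw [hw0 (θt r), real_inner_comm]
      have h3 : (innerSL ℝ w0) Ds = ⟪x i, Ds j⟫ := hw0 Ds
      rw [h2, h3] at h1
      exact h1
    -- derivative of each squared term
    have hsq : ∀ (i : Fin n) (j : Fin m),
        HasDerivAt (fun r => (deriv φ ⟪θt r j, x i⟫)^2)
          (2 * deriv φ ⟪θt s j, x i⟫ *
            (deriv (deriv φ) ⟪θt s j, x i⟫ * ⟪x i, Ds j⟫)) s := by
      intro i j
      have h1 : HasDerivAt (fun r => deriv φ ⟪θt r j, x i⟫)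
          (deriv (deriv φ) ⟪θt s j, x i⟫ * ⟪x i, Ds j⟫) s :=
        HasDerivAt.comp s ((diff2 hφ _).hasDerivAt) (hstep i j)
      have h2 := h1.fun_pow 2
      refine h2.congr_deriv ?_
      push_cast
      ring
    have hsum : HasDerivAt Gfun
        (∑ i, ∑ j, 2 * deriv φ ⟪θt s j, x i⟫ *
          (deriv (deriv φ) ⟪θt s j, x i⟫ * ⟪x i, Ds j⟫)) s := by
      have h1 : HasDerivAt (fun r => ∑ i, ∑ j, (deriv φ ⟪θt r j, x i⟫)^2)
          (∑ i, ∑ j, 2 * deriv φ ⟪θt s j, x i⟫ *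
            (deriv (deriv φ) ⟪θt s j, x i⟫ * ⟪x i, Ds j⟫)) s :=
        HasDerivAt.fun_sum (fun i _ => HasDerivAt.fun_sum (fun j _ => hsq i j))
      exact h1
    -- identify the derivative value
    have hval : (∑ i, ∑ j, 2 * deriv φ ⟪θt s j, x i⟫ *
          (deriv (deriv φ) ⟪θt s j, x i⟫ * ⟪x i, Ds j⟫))
        = -‖rgradG φ x (θt s)‖^2 := by
      have h1 : ⟪gradRegG φ x (θt s), Ds⟫
          = ∑ j, ∑ i, (2 * deriv φ ⟪θt s j, x i⟫ * deriv (deriv φ) ⟪θt s j, x i⟫) * ⟪x i, Ds j⟫ := by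
        rw [PiLp.inner_apply]
        apply Finset.sum_congr rfl
        intro j _
        show ⟪∑ i, (2 * deriv φ ⟪θt s j, x i⟫ * deriv (deriv φ) ⟪θt s j, x i⟫) • x i, Ds j⟫ = _
        rw [sum_inner]
        apply Finset.sum_congr rfl
        intro i _
        rw [real_inner_smul_left]
      have h2 : (∑ i, ∑ j, 2 * deriv φ ⟪θt s j, x i⟫ *
            (deriv (deriv φ) ⟪θt s j, x i⟫ * ⟪x i, Ds j⟫))
          = ⟪gradRegG φ x (θt s), Ds⟫ := by
        rw [h1, Finset.sum_comm]
        apply Finset.sum_congr rfl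
        intro i _
        apply Finset.sum_congr rfl
        intro j _
        ring
      rw [h2]
      -- ⟪u, -P u⟫ = -‖P u‖²
      have hmemK : rgradG φ x (θt s) ∈ LinearMap.ker (jacobian φ x (θt s)) := by
        show ((LinearMap.ker (jacobian φ x (θt s))).orthogonalProjectionOnto (gradRegG φ x (θt s)) : Param m d) ∈ _
        exact SetLike.coe_mem _
      have horth := Submodule.starProjection_inner_eq_zero (gradRegG φ x (θt s))
        (rgradG φ x (θt s)) hmemK
      have h3 : ⟪gradRegG φ x (θt s) - rgradG φ x (θt s), rgradG φ x (θt s)⟫ = (0:ℝ) := horth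
      rw [inner_sub_left] at h3
      have h4 : ⟪rgradG φ x (θt s), rgradG φ x (θt s)⟫ = (‖rgradG φ x (θt s)‖:ℝ)^2 :=
        real_inner_self_eq_norm_sq _
      have h5 : ⟪gradRegG φ x (θt s), Ds⟫ = -⟪gradRegG φ x (θt s), rgradG φ x (θt s)⟫ := by
        rw [hDs, inner_neg_right]
      rw [h5]
      rw [show ⟪gradRegG φ x (θt s), rgradG φ x (θt s)⟫ = (‖rgradG φ x (θt s)‖:ℝ)^2 by
        rw [← h4]; linarith [h3]]
    rw [hval] at hsum
    exact hsum
  -- PL inequality along the flow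
  have hPL : ∀ s, 0 ≤ s →
      μ * min (β^2) (ρ1 * ρ2 * (Gfun s - Gstar)) ≤ ‖rgradG φ x (θt s)‖^2 := by
    intro s hs
    exact PLbound hm x hμ hcoh hφ hρ1 hρ2 hφ' hφ''' hβ hnormal ν (θt s) (hzero s hs)
  -- G is antitone on [0, ∞)
  have hGanti : AntitoneOn Gfun (Set.Ici 0) := by
    apply antitoneOn_of_deriv_nonpos (convex_Ici 0)
    · exact fun s hs => ((hDG s hs).continuousAt).continuousWithinAt
    · intro s hs
      rw [interior_Ici] at hs
      exact ((hDG s (le_of_lt hs)).differentiableAt).differentiableWithinAt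
    · intro s hs
      rw [interior_Ici] at hs
      rw [(hDG s (le_of_lt hs)).deriv]
      simp [sq_nonneg]
  -- Phase 1: after time T1 the excess is below θ0
  have hphase1 : ∀ s, T1 ≤ s → Gfun s - Gstar ≤ θ0 := by
    intro s hs1
    by_contra hcon
    push_neg at hcon
    have hs0 : (0:ℝ) ≤ s := le_trans hT1pos.le hs1
    have hover : ∀ r, r ∈ Set.Icc (0:ℝ) s → θ0 < Gfun r - Gstar := by
      intro r hr
      have := hGanti (Set.mem_Ici.mpr hr.1) (Set.mem_Ici.mpr hs0) hr.2
      linarith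
    have hlin : AntitoneOn (fun r => Gfun r + μ * β^2 * r) (Set.Icc 0 s) := by
      apply antitoneOn_of_deriv_nonpos (convex_Icc 0 s)
      · intro r hr
        exact (((hDG r hr.1).add (hd_linear _ r)).continuousAt).continuousWithinAt
      · intro r hr
        rw [interior_Icc] at hr
        exact (((hDG r hr.1.le).add (hd_linear _ r)).differentiableAt).differentiableWithinAt
      · intro r hr
        rw [interior_Icc] at hr
        have hd := (hDG r hr.1.le).add (hd_linear (μ * β^2) r)
        rw [show deriv (fun r => Gfun r + μ * β^2 * r) r = _ from hd.deriv]
        have h1 := hPL r hr.1.le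
        have h2 : θ0 < Gfun r - Gstar := hover r ⟨hr.1.le, hr.2.le⟩
        have h3 : β^2 ≤ ρ1 * ρ2 * (Gfun r - Gstar) := by
          rw [hθ0] at h2
          rw [div_lt_iff₀ (by positivity)] at h2
          nlinarith
        rw [min_eq_left h3] at h1
        nlinarith
    have hends := hlin (Set.mem_Icc.mpr ⟨le_refl 0, hs0⟩) (Set.mem_Icc.mpr ⟨hs0, le_refl s⟩) hs0
    simp only at hends
    have hT1mul : μ * β^2 * T1 = Gfun 0 := by
      have hG0 : Gfun 0 = regG φ x (θt 0) := rfl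
      rw [hG0, hT1, mul_comm]
      exact div_mul_cancel₀ _ (by positivity)
    have h4 : μ * β^2 * T1 ≤ μ * β^2 * s := by
      apply mul_le_mul_of_nonneg_left hs1 (by positivity)
    have h5 : Gfun s ≤ 0 := by linarith [hends, hT1mul, h4]
    have h6 := hcon
    have h7 : Gfun s - Gstar ≤ 0 := by linarith
    linarith
  -- Phase 2: exponential decay
  have hTt : T1 ≤ t := by
    have hlog : 0 ≤ Real.log (max C 1) := Real.log_nonneg (le_max_right _ _)
    have h2 : 0 ≤ Real.log (max C 1) / k := by positivity
    linarith [ht]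
  have hEanti : AntitoneOn (fun r => (Gfun r - Gstar) * Real.exp (k * r)) (Set.Ici T1) := by
    apply antitoneOn_of_deriv_nonpos (convex_Ici T1)
    · intro r hr
      have hr0 : (0:ℝ) ≤ r := le_trans hT1pos.le hr
      exact ((((hDG r hr0).sub_const Gstar).mul
        ((hd_linear k r).exp)).continuousAt).continuousWithinAt
    · intro r hr
      rw [interior_Ici] at hr
      have hr0 : (0:ℝ) ≤ r := le_trans hT1pos.le hr.le
      exact ((((hDG r hr0).sub_const Gstar).mul
        ((hd_linear k r).exp)).differentiableAt).differentiableWithinAt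
    · intro r hr
      rw [interior_Ici] at hr
      have hr0 : (0:ℝ) ≤ r := le_trans hT1pos.le hr.le
      have hd := ((hDG r hr0).sub_const Gstar).mul ((hd_linear k r).exp)
      rw [show deriv (fun r => (Gfun r - Gstar) * Real.exp (k * r)) r = _ from hd.deriv]
      have h1 := hPL r hr0
      have h2 : Gfun r - Gstar ≤ θ0 := hphase1 r hr.le
      have h3 : ρ1 * ρ2 * (Gfun r - Gstar) ≤ β^2 := by
        rw [hθ0] at h2
        rw [le_div_iff₀ (by positivity)] at h2
        nlinarith
      rw [min_eq_right h3] at h1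
      have hnn := hh_nn r hr0
      have h4 : μ * (ρ1 * ρ2 * (Gfun r - Gstar)) ≤ ‖rgradG φ x (θt r)‖^2 := h1
      rw [hk]
      have hexp : 0 < Real.exp (ρ1 * ρ2 * μ * r) := Real.exp_pos _
      have h5 := mul_le_mul_of_nonneg_right h4 hexp.le
      nlinarith [h5]
  -- conclude the exponential bound at time t
  have ht0 : (0:ℝ) ≤ t := le_trans hT1pos.le hTt
  have hexpT : (Gfun t - Gstar) * Real.exp (k * t) ≤ θ0 * Real.exp (k * T1) := by
    have h1 := hEanti (Set.self_mem_Ici) (Set.mem_Ici.mpr hTt) hTt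
    simp only at h1
    have h2 : Gfun T1 - Gstar ≤ θ0 := hphase1 T1 le_rfl
    have h3 : (Gfun T1 - Gstar) * Real.exp (k * T1) ≤ θ0 * Real.exp (k * T1) := by
      apply mul_le_mul_of_nonneg_right h2 (Real.exp_pos _).le
    linarith
  have hmax_pos : (0:ℝ) < max C 1 := lt_of_lt_of_le one_pos (le_max_right _ _)
  have hht : Gfun t - Gstar ≤ θ0 * (max C 1)⁻¹ := by
    have h2 : Gfun t - Gstar ≤ (θ0 * Real.exp (k * T1)) / Real.exp (k * t) := by
      rw [le_div_iff₀ (Real.exp_pos _)]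
      exact hexpT
    have h3 : (θ0 * Real.exp (k * T1)) / Real.exp (k * t) = θ0 * Real.exp (k * T1 - k * t) := by
      rw [Real.exp_sub]
      ring
    have h4 : k * T1 - k * t ≤ -Real.log (max C 1) := by
      have h5 : Real.log (max C 1) / k ≤ t - T1 := by
        linarith [ht]
      rw [div_le_iff₀ hkpos] at h5
      nlinarith
    have h6 : Real.exp (k * T1 - k * t) ≤ Real.exp (-Real.log (max C 1)) :=
      Real.exp_le_exp.mpr h4
    have h7 : Real.exp (-Real.log (max C 1)) = (max C 1)⁻¹ := by
      rw [Real.exp_neg, Real.exp_log hmax_pos]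
    calc Gfun t - Gstar ≤ (θ0 * Real.exp (k * T1)) / Real.exp (k * t) := h2
      _ = θ0 * Real.exp (k * T1 - k * t) := h3
      _ ≤ θ0 * Real.exp (-Real.log (max C 1)) := by
          apply mul_le_mul_of_nonneg_left h6 hθ0pos.le
      _ = θ0 * (max C 1)⁻¹ := by rw [h7]
  -- the threshold is what we need
  have hfinal : θ0 * (max C 1)⁻¹ ≤ ρ1 * ρ2 * ε^2 := by
    rcases le_total C 1 with hC1 | hC1
    · rw [max_eq_right hC1]
      simp only [inv_one, mul_one]
      have h1 : β^2 ≤ ρ1^2 * ρ2^2 * ε^2 := by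
        rw [hC, div_le_one (by positivity)] at hC1
        exact hC1
      rw [hθ0, div_le_iff₀ (by positivity)]
      nlinarith
    · rw [max_eq_left hC1]
      apply le_of_eq
      rw [hθ0, hC]
      field_simp
  -- conclude pointwise bound
  have hQle : ρ1 * ρ2 * (⟪θt t j0, x i0⟫ - ν i0)^2 ≤ Gfun t - Gstar := by
    have h1 : Gfun t - Gstar
        = ∑ i, ((∑ j, (deriv φ ⟪θt t j, x i⟫)^2) - (m:ℝ) * (deriv φ (ν i))^2) := by
      rw [Finset.sum_sub_distrib]
      rfl
    have h2 := lb1d hφ hρ1 hρ2 hφ' hφ''' (fun j => ⟪θt t j, x i0⟫) (ν i0) (hzero t ht0 i0) j0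
    rw [h1]
    calc ρ1 * ρ2 * (⟪θt t j0, x i0⟫ - ν i0)^2
        ≤ (∑ j, (deriv φ ⟪θt t j, x i0⟫)^2) - (m:ℝ) * (deriv φ (ν i0))^2 := h2
      _ ≤ ∑ i, ((∑ j, (deriv φ ⟪θt t j, x i⟫)^2) - (m:ℝ) * (deriv φ (ν i))^2) := by
          apply Finset.single_le_sum
            (f := fun i => (∑ j, (deriv φ ⟪θt t j, x i⟫)^2) - (m:ℝ) * (deriv φ (ν i))^2)
            (fun i _ => nonneg1d hφ hρ1 hρ2 hφ' hφ''' hm (fun j => ⟪θt t j, x i⟫) (ν i)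
              (hzero t ht0 i)) (Finset.mem_univ i0)
  have hsqle : (⟪θt t j0, x i0⟫ - ν i0)^2 ≤ ε^2 := by
    have h1 : ρ1 * ρ2 * (⟪θt t j0, x i0⟫ - ν i0)^2 ≤ ρ1 * ρ2 * ε^2 := by
      calc ρ1 * ρ2 * (⟪θt t j0, x i0⟫ - ν i0)^2 ≤ Gfun t - Gstar := hQle
        _ ≤ θ0 * (max C 1)⁻¹ := hht
        _ ≤ ρ1 * ρ2 * ε^2 := hfinal
    have h2 : 0 < ρ1 * ρ2 := mul_pos hρ1 hρ2
    nlinarith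
  nlinarith [sq_abs (⟪θt t j0, x i0⟫ - ν i0), abs_nonneg (⟪θt t j0, x i0⟫ - ν i0)]
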